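/- Let G be a strongly topological gyrogroup with symmetric neighborhood base 𝒰 at 0 and H a neutral admissible subgyrogroup generated from 𝒰. If the quotient space G/H is Fréchet-Urysohn, then G/H is a strong α₄-space at π(0): for any doubly-indexed set {x_{m,n} : m,n ∈ ℕ} ⊆ G/H with lim_{n→∞} x_{m,n} = π(0) for each m, there exist strictly increasing sequences (i_k), (j_k) of natural numbers with lim_{k→∞} x_{i_k, j_k} = π(0). -/

import Mathlib

open Filter Topology

class Gyrogroup (G : Type*) where
  add : G → G → G
  zero : G
  neg : G → G
  gyr : G → G → G → G
  zero_add : ∀ a, add zero a = a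
  add_zero : ∀ a, add a zero = a
  zero_unique : ∀ z : G, (∀ a, add z a = a ∧ add a z = a) → z = zero
  neg_add : ∀ a, add (neg a) a = zero
  add_neg : ∀ a, add a (neg a) = zero
  neg_unique : ∀ x y : G, add y x = zero → add x y = zero → y = neg x
  gyr_add : ∀ x y a b, gyr x y (add a b) = add (gyr x y a) (gyr x y b)
  gyr_bijective : ∀ x y, Function.Bijective (gyr x y)
  gyroassoc : ∀ x y z, add x (add y z) = add (add x y) (gyr x y z)
  loop : ∀ x y, gyr (add x y) y = gyr x y

namespace Gyrogroup

variable {G : Type*} [Gyrogroup G]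

/-- Elementwise sum of two subsets: `A ⊕ B = {a ⊕ b : a ∈ A, b ∈ B}`. -/
def sAdd (A B : Set G) : Set G := Set.image2 add A B

/-- Elementwise inverse of a subset: `⊖A = {⊖a : a ∈ A}`. -/
def sNeg (A : Set G) : Set G := neg '' A

/-- The left coset `x ⊕ H`. -/
def lcoset (x : G) (H : Set G) : Set G := (fun h => add x h) '' H

/-- The setoid identifying points with equal left cosets; `Quotient` of it is `G/H`. -/
def cosetSetoid (G : Type*) [Gyrogroup G] (H : Set G) : Setoid G :=
  ⟨fun x y => lcoset x H = lcoset y H,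
    ⟨fun _ => rfl, fun h => h.symm, fun h1 h2 => h1.trans h2⟩⟩

end Gyrogroup

/-- A (Hausdorff) topological gyrogroup: `⊕` is jointly continuous and `⊖` is continuous. -/
class TopologicalGyrogroup (G : Type*) [TopologicalSpace G] extends Gyrogroup G where
  t2 : T2Space G
  continuous_add : Continuous fun p : G × G => add p.1 p.2
  continuous_neg : Continuous neg

namespace GyroProof
open Gyrogroup

variable {G : Type*} [Gyrogroup G]

theorem gadd_left_cancel {a b c : G} (h : add a b = add a c) : b = c := by
  have h1 : gyr (neg a) a b = gyr (neg a) a c := by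
    rw [← Gyrogroup.zero_add (gyr (neg a) a b), ← Gyrogroup.zero_add (gyr (neg a) a c), ← Gyrogroup.neg_add a,
      ← gyroassoc, ← gyroassoc, h]
  exact (gyr_bijective (neg a) a).1 h1

theorem ggyr_zero_left (a z : G) : gyr zero a z = z := by
  have h : add a (gyr zero a z) = add a z := by
    have := gyroassoc (zero : G) a z
    rw [Gyrogroup.zero_add, Gyrogroup.zero_add] at this
    exact this.symm
  exact (gadd_left_cancel h).symm ▸ rfl

theorem ggyr_neg_add (a z : G) : gyr (neg a) a z = z := by
  have h := loop (neg a) a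
  rw [Gyrogroup.neg_add] at h
  rw [← h, ggyr_zero_left]

theorem ggyr_add_neg (a z : G) : gyr a (neg a) z = z := by
  have h := loop a (neg a)
  rw [Gyrogroup.add_neg] at h
  rw [← h, ggyr_zero_left]

theorem gneg_add_cancel_left (a b : G) : add (neg a) (add a b) = b := by
  rw [gyroassoc, Gyrogroup.neg_add, Gyrogroup.zero_add, ggyr_neg_add]

theorem gadd_neg_cancel_left (a b : G) : add a (add (neg a) b) = b := by
  rw [gyroassoc, Gyrogroup.add_neg, Gyrogroup.zero_add, ggyr_add_neg]

theorem geq_neg {a b : G} (h : add a b = zero) : b = neg a :=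
  gadd_left_cancel (h.trans (Gyrogroup.add_neg a).symm)

theorem gneg_neg (a : G) : neg (neg a) = a := (geq_neg (Gyrogroup.neg_add a)).symm

theorem gneg_add_rev (a b : G) : neg (add a b) = gyr a b (add (neg b) (neg a)) := by
  have h0 : add (add a b) (gyr a b (add (neg b) (neg a))) = zero := by
    rw [← gyroassoc, gadd_neg_cancel_left, Gyrogroup.add_neg]
  exact (geq_neg h0).symm

theorem gtranslate_back (x v : G) : x = add (add x v) (gyr x v (neg v)) := by
  have := gyroassoc x v (neg v)
  rw [Gyrogroup.add_neg, Gyrogroup.add_zero] at this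
  exact this

end GyroProof

namespace GyroProof
open Gyrogroup

variable {G : Type*} [Gyrogroup G]

structure IsSubH (H : Set G) : Prop where
  zero_mem : zero ∈ H
  neg_mem : ∀ h ∈ H, neg h ∈ H
  add_mem : ∀ h1 ∈ H, ∀ h2 ∈ H, add h1 h2 ∈ H
  gyr_mem : ∀ x y : G, ∀ h ∈ H, gyr x y h ∈ H
  gyr_surj : ∀ x y : G, ∀ h ∈ H, ∃ h' ∈ H, gyr x y h' = h

theorem mem_lcoset_self {H : Set G} (hs : IsSubH H) (a : G) : a ∈ lcoset a H :=
  ⟨zero, hs.zero_mem, Gyrogroup.add_zero a⟩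

theorem lcoset_subset {H : Set G} (hs : IsSubH H) {a b : G} (hab : a ∈ lcoset b H) :
    lcoset a H ⊆ lcoset b H := by
  obtain ⟨h, hh, rfl⟩ := hab
  rintro y ⟨h2, hh2, rfl⟩
  obtain ⟨z, hz, hz2⟩ := hs.gyr_surj b h h2 hh2
  exact ⟨add h z, hs.add_mem h hh z hz, by simp only []; rw [gyroassoc, hz2]⟩

theorem mem_lcoset_symm {H : Set G} (hs : IsSubH H) {a b : G} (hab : a ∈ lcoset b H) :
    b ∈ lcoset a H := by
  obtain ⟨h, hh, rfl⟩ := hab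
  exact ⟨gyr b h (neg h), hs.gyr_mem b h _ (hs.neg_mem h hh), (gtranslate_back b h).symm⟩

theorem lcoset_eq_iff {H : Set G} (hs : IsSubH H) {a b : G} :
    lcoset a H = lcoset b H ↔ a ∈ lcoset b H := by
  constructor
  · intro h; rw [← h]; exact mem_lcoset_self hs a
  · intro h
    exact Set.Subset.antisymm (lcoset_subset hs h) (lcoset_subset hs (mem_lcoset_symm hs h))

theorem mk_eq_mk {H : Set G} (hs : IsSubH H) {a b : G} :
    Quotient.mk (cosetSetoid G H) a = Quotient.mk (cosetSetoid G H) b ↔ a ∈ lcoset b H := by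
  constructor
  · intro h
    have : (cosetSetoid G H).r a b := Quotient.exact h
    exact (lcoset_eq_iff hs).1 this
  · intro h
    exact Quotient.sound ((lcoset_eq_iff hs).2 h)

theorem mk_add_H {H : Set G} (hs : IsSubH H) (w : G) {h : G} (hh : h ∈ H) :
    Quotient.mk (cosetSetoid G H) (add w h) = Quotient.mk (cosetSetoid G H) w :=
  (mk_eq_mk hs).2 ⟨h, hh, rfl⟩

theorem mk_mem_H {H : Set G} (hs : IsSubH H) {h : G} (hh : h ∈ H) :
    Quotient.mk (cosetSetoid G H) h = Quotient.mk (cosetSetoid G H) zero :=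
  (mk_eq_mk hs).2 ⟨h, hh, Gyrogroup.zero_add h⟩

theorem mem_H_of_mk_eq {H : Set G} (hs : IsSubH H) {a : G}
    (h : Quotient.mk (cosetSetoid G H) a = Quotient.mk (cosetSetoid G H) zero) : a ∈ H := by
  obtain ⟨h1, hh1, he⟩ := (mk_eq_mk hs).1 h
  simp only [Gyrogroup.zero_add] at he
  rwa [← he]
  

end GyroProof

namespace GyroProof
open Gyrogroup

variable {G : Type*} [TopologicalSpace G] [TopologicalGyrogroup G]

theorem cont_radd (h : G) : Continuous fun a : G => add a h := by
  exact TopologicalGyrogroup.continuous_add.comp (continuous_id.prodMk continuous_const)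

theorem cont_ladd (g : G) : Continuous fun a : G => add g a := by
  exact TopologicalGyrogroup.continuous_add.comp (continuous_const.prodMk continuous_id)

def ltransHomeo (x : G) : G ≃ₜ G where
  toFun := fun a => add x a
  invFun := fun a => add (neg x) a
  left_inv := fun a => gneg_add_cancel_left x a
  right_inv := fun a => gadd_neg_cancel_left x a
  continuous_toFun := cont_ladd x
  continuous_invFun := cont_ladd (neg x)

variable (H : Set G)

theorem quot_map : IsQuotientMap (Quotient.mk (cosetSetoid G H)) :=
  isQuotientMap_quotient_mk'

theorem cont_mk : Continuous (Quotient.mk (cosetSetoid G H)) := (quot_map H).continuous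

variable {H}

theorem preimage_image_mk (hs : IsSubH H) (W : Set G) :
    Quotient.mk (cosetSetoid G H) ⁻¹' (Quotient.mk (cosetSetoid G H) '' W) =
      ⋃ h ∈ H, (fun a => add a h) ⁻¹' W := by
  ext a
  simp only [Set.mem_preimage, Set.mem_image, Set.mem_iUnion]
  constructor
  · rintro ⟨w, hw, hww⟩
    have : a ∈ lcoset w H := (mk_eq_mk hs).1 hww.symm
    obtain ⟨h, hh, hah⟩ := mem_lcoset_symm hs this
    exact ⟨h, hh, by simpa [← hah] using hw⟩
  · rintro ⟨h, hh, hW⟩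
    exact ⟨add a h, hW, (mk_add_H hs a hh).symm ▸ rfl⟩

theorem isOpenMap_mk (hs : IsSubH H) : IsOpenMap (Quotient.mk (cosetSetoid G H)) := by
  intro W hW
  rw [← (quot_map H).isOpen_preimage, preimage_image_mk hs]
  exact isOpen_biUnion fun h _ => (cont_radd h).isOpen_preimage W hW

noncomputable def Lmap (hs : IsSubH H) (g : G) :
    Quotient (cosetSetoid G H) → Quotient (cosetSetoid G H) :=
  Quotient.map (fun c => add g c) (by
    intro a b hab
    have hba : b ∈ lcoset a H := by
      have : lcoset a H = lcoset b H := hab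
      exact (lcoset_eq_iff hs).1 this.symm
    obtain ⟨h, hh, rfl⟩ := hba
    show lcoset (add g a) H = lcoset (add g (add a h)) H
    refine ((lcoset_eq_iff hs).2 ?_).symm
    exact ⟨gyr g a h, hs.gyr_mem g a h hh, (gyroassoc g a h).symm⟩)

theorem Lmap_mk (hs : IsSubH H) (g c : G) :
    Lmap hs g (Quotient.mk (cosetSetoid G H) c) = Quotient.mk (cosetSetoid G H) (add g c) := rfl

theorem Lmap_cont (hs : IsSubH H) (g : G) : Continuous (Lmap hs g) := by
  rw [(quot_map H).continuous_iff]
  have : Lmap hs g ∘ Quotient.mk (cosetSetoid G H) =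
      (Quotient.mk (cosetSetoid G H)) ∘ fun c => add g c := rfl
  rw [this]
  exact (cont_mk H).comp (cont_ladd g)

theorem Lmap_neg_Lmap (hs : IsSubH H) (g : G) (q : Quotient (cosetSetoid G H)) :
    Lmap hs (neg g) (Lmap hs g q) = q := by
  induction q using Quotient.ind
  rw [Lmap_mk, Lmap_mk, gneg_add_cancel_left]

end GyroProof

namespace GyroProof
open Gyrogroup

variable {G : Type*} [TopologicalSpace G] [TopologicalGyrogroup G]

structure GyroSetup (G : Type*) [TopologicalSpace G] [TopologicalGyrogroup G] where
  U : Set (Set G)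
  hbasis : (𝓝 (zero : G)).HasBasis (fun V : Set G => V ∈ U) id
  hsym : ∀ V ∈ U, sNeg V = V
  hgyr : ∀ V ∈ U, ∀ x y : G, gyr x y '' V = V
  Useq : ℕ → Set G
  hmem : ∀ n, Useq n ∈ U
  hopen : ∀ n, IsOpen (Useq n)
  hchain : ∀ n : ℕ, sAdd (Useq (n + 1)) (sAdd (Useq (n + 1)) (Useq (n + 1))) ⊆ Useq n
  H : Set G
  hH : H = ⋂ n, Useq n
  hneutral : ∀ W : Set G, IsOpen W → zero ∈ W →
    ∃ V : Set G, IsOpen V ∧ zero ∈ V ∧ sAdd H V ⊆ sAdd W H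

variable (S : GyroSetup G)

theorem S_nhds {V : Set G} (hV : V ∈ S.U) : V ∈ 𝓝 (zero : G) := S.hbasis.mem_of_mem hV

theorem S_zero_mem {V : Set G} (hV : V ∈ S.U) : zero ∈ V := mem_of_mem_nhds (S_nhds S hV)

theorem S_neg_mem {V : Set G} (hV : V ∈ S.U) {v : G} (hv : v ∈ V) : neg v ∈ V := by
  rw [← S.hsym V hV]; exact ⟨v, hv, rfl⟩

theorem S_gyr_mem {V : Set G} (hV : V ∈ S.U) (x y : G) {v : G} (hv : v ∈ V) :
    gyr x y v ∈ V := by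
  have h := S.hgyr V hV x y
  rw [← h]
  exact ⟨v, hv, rfl⟩

theorem S_gyr_surj {V : Set G} (hV : V ∈ S.U) (x y : G) {v : G} (hv : v ∈ V) :
    ∃ v' ∈ V, gyr x y v' = v := by
  rw [← S.hgyr V hV x y] at hv
  obtain ⟨v', hv', he⟩ := hv
  exact ⟨v', hv', he⟩

theorem S_H_sub (n : ℕ) : S.H ⊆ S.Useq n := by rw [S.hH]; exact Set.iInter_subset _ n

theorem S_sub : IsSubH S.H := by
  constructor
  · rw [S.hH]; exact Set.mem_iInter.2 fun n => S_zero_mem S (S.hmem n)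
  · intro h hh
    rw [S.hH] at hh ⊢
    exact Set.mem_iInter.2 fun n => S_neg_mem S (S.hmem n) (Set.mem_iInter.1 hh n)
  · intro h1 hh1 h2 hh2
    rw [S.hH]
    refine Set.mem_iInter.2 fun n => S.hchain n ⟨h1, S_H_sub S (n+1) hh1, add h2 zero,
      ⟨h2, S_H_sub S (n+1) hh2, zero, S_zero_mem S (S.hmem (n+1)), rfl⟩, ?_⟩
    rw [Gyrogroup.add_zero]
  · intro x y h hh
    rw [S.hH] at hh ⊢
    exact Set.mem_iInter.2 fun n => S_gyr_mem S (S.hmem n) x y (Set.mem_iInter.1 hh n)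
  · intro x y h hh
    rw [S.hH] at hh
    obtain ⟨z, hz0, hze⟩ := S_gyr_surj S (S.hmem 0) x y (Set.mem_iInter.1 hh 0)
    refine ⟨z, ?_, hze⟩
    rw [S.hH]
    refine Set.mem_iInter.2 fun n => ?_
    obtain ⟨z', hz', hze'⟩ := S_gyr_surj S (S.hmem n) x y (Set.mem_iInter.1 hh n)
    have : z' = z := (gyr_bijective x y).1 (hze'.trans hze.symm)
    rwa [← this]

theorem S_exists_U_subset {N : Set G} (hN : N ∈ 𝓝 (zero : G)) : ∃ V ∈ S.U, V ⊆ N := by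
  obtain ⟨V, hV, hsub⟩ := S.hbasis.mem_iff.1 hN
  exact ⟨V, hV, hsub⟩

theorem S_exists_U_add {N : Set G} (hN : N ∈ 𝓝 (zero : G)) :
    ∃ V ∈ S.U, ∀ v ∈ V, ∀ v' ∈ V, add v v' ∈ N := by
  have hc : Tendsto (fun p : G × G => add p.1 p.2) (𝓝 ((zero : G), (zero : G)))
      (𝓝 (zero : G)) := by
    have h2 := (TopologicalGyrogroup.continuous_add (G := G)).tendsto ((zero : G), (zero : G))
    simpa [Gyrogroup.zero_add] using h2
  have hp : (fun p : G × G => add p.1 p.2) ⁻¹' N ∈ 𝓝 ((zero : G), (zero : G)) := hc hN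
  rw [mem_nhds_prod_iff] at hp
  obtain ⟨s, hs, t, ht, hsub⟩ := hp
  obtain ⟨V, hV, hVsub⟩ := S_exists_U_subset S (Filter.inter_mem hs ht)
  refine ⟨V, hV, fun v hv v' hv' => ?_⟩
  exact hsub (show (v, v') ∈ s ×ˢ t from ⟨(hVsub hv).1, (hVsub hv').2⟩)

theorem S_mk_Useq_nhds (n : ℕ) :
    Quotient.mk (cosetSetoid G S.H) '' (S.Useq n) ∈
      𝓝 (Quotient.mk (cosetSetoid G S.H) zero) :=
  (isOpenMap_mk (S_sub S) _ (S.hopen n)).mem_nhds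
    ⟨zero, S_zero_mem S (S.hmem n), rfl⟩

theorem S_sadd_Useq (n : ℕ) {w h : G} (hw : w ∈ S.Useq (n+1)) (hh : h ∈ S.H) :
    add w h ∈ S.Useq n :=
  S.hchain n ⟨w, hw, add h zero,
    ⟨h, S_H_sub S (n+1) hh, zero, S_zero_mem S (S.hmem (n+1)), rfl⟩,
    by rw [Gyrogroup.add_zero]⟩

theorem S_inter_opens {q : Quotient (cosetSetoid G S.H)}
    (hq : ∀ n, q ∈ Quotient.mk (cosetSetoid G S.H) '' (S.Useq (n+1))) :
    q = Quotient.mk (cosetSetoid G S.H) zero := by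
  have ha : Quotient.mk (cosetSetoid G S.H) q.out = q := Quotient.out_eq q
  have hmem : ∀ n, q.out ∈ S.Useq n := by
    intro n
    obtain ⟨v, hv, hqv⟩ := hq n
    have h1 : Quotient.mk (cosetSetoid G S.H) q.out = Quotient.mk (cosetSetoid G S.H) v :=
      ha.trans hqv.symm
    obtain ⟨h, hh, he⟩ := (mk_eq_mk (S_sub S)).1 h1
    simp only [] at he
    rw [← he]
    exact S_sadd_Useq S n hv hh
  have : q.out ∈ S.H := by
    have h2 := Set.mem_iInter.2 hmem
    rwa [← S.hH] at h2
  rw [← ha]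
  exact mk_mem_H (S_sub S) this

theorem S_const_val {z : ℕ → Quotient (cosetSetoid G S.H)}
    (hz : Tendsto z atTop (𝓝 (Quotient.mk (cosetSetoid G S.H) zero)))
    {v : Quotient (cosetSetoid G S.H)} (hv : {k | z k = v}.Infinite) :
    v = Quotient.mk (cosetSetoid G S.H) zero := by
  apply S_inter_opens S
  intro n
  have hev : ∀ᶠ k in atTop, z k ∈ Quotient.mk (cosetSetoid G S.H) '' (S.Useq (n+1)) :=
    hz (S_mk_Useq_nhds S (n+1))
  obtain ⟨N, hN⟩ := eventually_atTop.1 hev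
  obtain ⟨k, hk, hlt⟩ := hv.exists_gt N
  rw [← hk]
  exact hN k hlt.le

theorem S_finite_fiber_row {xr : ℕ → Quotient (cosetSetoid G S.H)}
    (hx : Tendsto xr atTop (𝓝 (Quotient.mk (cosetSetoid G S.H) zero)))
    {v : Quotient (cosetSetoid G S.H)} (hv : v ≠ Quotient.mk (cosetSetoid G S.H) zero) :
    {n | xr n = v}.Finite := by
  by_contra h
  exact hv (S_const_val S hx h)

end GyroProof

namespace GyroProof
open Gyrogroup

variable {G : Type*} [TopologicalSpace G] [TopologicalGyrogroup G] (S : GyroSetup G)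

theorem S_sat (O : Set (Quotient (cosetSetoid G S.H))) {w h : G}
    (hw : w ∈ Quotient.mk (cosetSetoid G S.H) ⁻¹' O) (hh : h ∈ S.H) :
    add w h ∈ Quotient.mk (cosetSetoid G S.H) ⁻¹' O := by
  have : Quotient.mk (cosetSetoid G S.H) (add w h) = Quotient.mk (cosetSetoid G S.H) w :=
    mk_add_H (S_sub S) w hh
  simpa [Set.mem_preimage, this] using hw

theorem keyE {O : Set (Quotient (cosetSetoid G S.H))} (hO : IsOpen O)
    (h0 : Quotient.mk (cosetSetoid G S.H) zero ∈ O) :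
    ∃ V ∈ S.U, ∀ v ∈ V, ∀ v' ∈ V, ∀ h ∈ S.H,
      Quotient.mk (cosetSetoid G S.H) (add (neg (add v h)) v') ∈ O := by
  set W : Set G := Quotient.mk (cosetSetoid G S.H) ⁻¹' O with hW
  have hWopen : IsOpen W := hO.preimage (cont_mk S.H)
  have hW0 : zero ∈ W := h0
  obtain ⟨V, hVopen, hV0, hVsub⟩ := S.hneutral W hWopen hW0
  have hHVW : ∀ h ∈ S.H, ∀ v ∈ V, add h v ∈ W := by
    intro h hh v hv
    obtain ⟨w, hw, h1, hh1, he⟩ := hVsub ⟨h, hh, v, hv, rfl⟩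
    rw [← he]
    exact S_sat S O hw hh1
  obtain ⟨Vc, hVc, hVcsub⟩ := S_exists_U_subset S (hVopen.mem_nhds hV0)
  obtain ⟨V₂, hV₂, hV₂add⟩ := S_exists_U_add S (S_nhds S hVc)
  refine ⟨V₂, hV₂, fun v hv v' hv' h hh => ?_⟩
  obtain ⟨v₁, hv₁, hv₁e⟩ := S_gyr_surj S hV₂ v h hv'
  obtain ⟨z, hz, hze⟩ := S_gyr_surj S hV₂ (neg h) (neg v) hv₁
  have e1 : add (neg (add v h)) v' = gyr v h (add (add (neg h) (neg v)) v₁) := by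
    rw [gneg_add_rev, ← hv₁e, ← gyr_add]
  have e2 : add (add (neg h) (neg v)) v₁ = add (neg h) (add (neg v) z) := by
    rw [gyroassoc, hze]
  have hs : add (neg v) z ∈ Vc := hV₂add _ (S_neg_mem S hV₂ hv) _ hz
  have e3 : add (neg (add v h)) v' = add (gyr v h (neg h)) (gyr v h (add (neg v) z)) := by
    rw [e1, e2, gyr_add]
  have hmem : add (gyr v h (neg h)) (gyr v h (add (neg v) z)) ∈ W := by
    apply hHVW
    · exact (S_sub S).gyr_mem v h _ ((S_sub S).neg_mem h hh)
    · exact hVcsub (S_gyr_mem S hVc v h hs)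
  rw [e3]
  exact hmem

theorem keyT {b : ℕ → Quotient (cosetSetoid G S.H)}
    (hb : Tendsto b atTop (𝓝 (Quotient.mk (cosetSetoid G S.H) zero)))
    {g : ℕ → G}
    (hg : Tendsto (fun k => Quotient.mk (cosetSetoid G S.H) (g k)) atTop
      (𝓝 (Quotient.mk (cosetSetoid G S.H) zero))) :
    Tendsto (fun k => Lmap (S_sub S) (neg (g k)) (b k)) atTop
      (𝓝 (Quotient.mk (cosetSetoid G S.H) zero)) := by
  rw [tendsto_nhds]
  intro O hO h0
  obtain ⟨V₂, hV₂, hE⟩ := keyE S hO h0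
  have hON : Quotient.mk (cosetSetoid G S.H) '' interior V₂ ∈
      𝓝 (Quotient.mk (cosetSetoid G S.H) zero) :=
    (isOpenMap_mk (S_sub S) _ isOpen_interior).mem_nhds
      ⟨zero, mem_interior_iff_mem_nhds.2 (S_nhds S hV₂), rfl⟩
  have ev1 : ∀ᶠ k in atTop, Quotient.mk (cosetSetoid G S.H) (g k) ∈
      Quotient.mk (cosetSetoid G S.H) '' interior V₂ := hg hON
  have ev2 : ∀ᶠ k in atTop, b k ∈ Quotient.mk (cosetSetoid G S.H) '' interior V₂ := hb hON
  filter_upwards [ev1, ev2] with k h1 h2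
  obtain ⟨v, hv, hve⟩ := h1
  obtain ⟨v', hv', hv'e⟩ := h2
  obtain ⟨h, hh, he⟩ := (mk_eq_mk (S_sub S)).1 (hve.symm : _)
  simp only [] at he
  have : Lmap (S_sub S) (neg (g k)) (b k) =
      Quotient.mk (cosetSetoid G S.H) (add (neg (add v h)) v') := by
    rw [← hv'e, Lmap_mk, ← he]
  show Lmap (S_sub S) (neg (g k)) (b k) ∈ O
  rw [this]
  exact hE v (interior_subset hv) v' (interior_subset hv') h hh

theorem keyN {s : ℕ → G}
    (hs : Tendsto (fun k => Quotient.mk (cosetSetoid G S.H) (s k)) atTop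
      (𝓝 (Quotient.mk (cosetSetoid G S.H) zero))) :
    Tendsto (fun k => Quotient.mk (cosetSetoid G S.H) (neg (s k))) atTop
      (𝓝 (Quotient.mk (cosetSetoid G S.H) zero)) := by
  rw [tendsto_nhds]
  intro O hO h0
  obtain ⟨V₂, hV₂, hE⟩ := keyE S hO h0
  have hON : Quotient.mk (cosetSetoid G S.H) '' interior V₂ ∈
      𝓝 (Quotient.mk (cosetSetoid G S.H) zero) :=
    (isOpenMap_mk (S_sub S) _ isOpen_interior).mem_nhds
      ⟨zero, mem_interior_iff_mem_nhds.2 (S_nhds S hV₂), rfl⟩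
  filter_upwards [hs hON] with k h1
  obtain ⟨v, hv, hve⟩ := h1
  obtain ⟨h, hh, he⟩ := (mk_eq_mk (S_sub S)).1 (hve.symm : _)
  simp only [] at he
  have : Quotient.mk (cosetSetoid G S.H) (neg (s k)) =
      Quotient.mk (cosetSetoid G S.H) (add (neg (add v h)) zero) := by
    rw [Gyrogroup.add_zero, ← he]
  show Quotient.mk (cosetSetoid G S.H) (neg (s k)) ∈ O
  rw [this]
  exact hE v (interior_subset hv) zero (S_zero_mem S hV₂) h hh

theorem S_closure_sub {A : Set G} {V : Set G} (hV : V ∈ S.U) :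
    closure A ⊆ sAdd A V := by
  intro x hx
  have hN : IsOpen ((fun a => add x a) '' interior V) :=
    (ltransHomeo x).isOpenMap _ isOpen_interior
  have hxN : x ∈ (fun a => add x a) '' interior V :=
    ⟨zero, mem_interior_iff_mem_nhds.2 (S_nhds S hV), Gyrogroup.add_zero x⟩
  obtain ⟨a, haN, haA⟩ := mem_closure_iff.1 hx _ hN hxN
  obtain ⟨v, hv, hav⟩ := haN
  refine ⟨a, haA, gyr x v (neg v), S_gyr_mem S hV x v (S_neg_mem S hV (interior_subset hv)), ?_⟩
  rw [← hav]
  exact (gtranslate_back x v).symm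

theorem S_H_closed : IsClosed S.H := by
  rw [← closure_subset_iff_isClosed]
  intro x hx
  have hmem : ∀ n, x ∈ S.Useq n := by
    intro n
    obtain ⟨h, hh, u, hu, he⟩ := S_closure_sub S (S.hmem (n+1)) hx
    rw [← he]
    exact S.hchain n ⟨h, S_H_sub S (n+1) hh, add u zero,
      ⟨u, hu, zero, S_zero_mem S (S.hmem (n+1)), rfl⟩, by rw [Gyrogroup.add_zero]⟩
  rw [S.hH]
  exact Set.mem_iInter.2 hmem

theorem S_not_in_HV {b : G} (hb : b ∉ S.H) : ∃ V₀ ∈ S.U, b ∉ sAdd S.H V₀ := by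
  by_contra hc
  push_neg at hc
  apply hb
  have hbc : b ∈ closure S.H := by
    rw [mem_closure_iff]
    intro O hOopen hbO
    have hpre : (fun a => add b a) ⁻¹' O ∈ 𝓝 (zero : G) := by
      apply (cont_ladd b).continuousAt.preimage_mem_nhds
      rw [Gyrogroup.add_zero]
      exact hOopen.mem_nhds hbO
    obtain ⟨V, hV, hVsub⟩ := S_exists_U_subset S hpre
    obtain ⟨h, hh, v, hv, hbe⟩ := hc V hV
    refine ⟨h, ?_, hh⟩
    have : h = add b (gyr h v (neg v)) := by
      rw [← hbe]; exact gtranslate_back h v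
    rw [this]
    exact hVsub (S_gyr_mem S hV h v (S_neg_mem S hV hv))
  rwa [(S_H_closed S).closure_eq] at hbc

theorem S_dual_neutral {Ua : Set G} (hUa : Ua ∈ S.U) :
    ∃ V' ∈ S.U, ∀ v ∈ V', ∀ h ∈ S.H, add v h ∈ sAdd S.H Ua := by
  obtain ⟨V, hVopen, hV0, hVsub⟩ := S.hneutral (interior Ua) isOpen_interior
    (mem_interior_iff_mem_nhds.2 (S_nhds S hUa))
  obtain ⟨V', hV', hV'sub⟩ := S_exists_U_subset S (hVopen.mem_nhds hV0)
  refine ⟨V', hV', fun v hv h hh => ?_⟩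
  obtain ⟨u, hu, h₁, hh₁, he⟩ := hVsub
    ⟨neg h, (S_sub S).neg_mem h hh, neg v, hV'sub (S_neg_mem S hV' hv), rfl⟩
  have e1 : neg (add v h) = add (gyr v h u) (gyr v h h₁) := by
    rw [gneg_add_rev, ← he, gyr_add]
  have e2 : add v h = add (gyr (gyr v h u) (gyr v h h₁) (neg (gyr v h h₁)))
      (gyr (gyr v h u) (gyr v h h₁) (neg (gyr v h u))) := by
    rw [← gyr_add, ← gneg_add_rev, ← e1, gneg_neg]
  rw [e2]
  exact ⟨_, (S_sub S).gyr_mem _ _ _ ((S_sub S).neg_mem _ ((S_sub S).gyr_mem v h h₁ hh₁)),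
    _, S_gyr_mem S hUa _ _ (S_neg_mem S hUa (S_gyr_mem S hUa v h (interior_subset hu))), rfl⟩

theorem S_sep {q : Quotient (cosetSetoid G S.H)}
    (hq : q ≠ Quotient.mk (cosetSetoid G S.H) zero) :
    ∃ O1 O2 : Set (Quotient (cosetSetoid G S.H)), IsOpen O1 ∧ IsOpen O2 ∧
      Quotient.mk (cosetSetoid G S.H) zero ∈ O1 ∧ q ∈ O2 ∧ O1 ∩ O2 = ∅ := by
  have hb : Quotient.mk (cosetSetoid G S.H) q.out = q := Quotient.out_eq q
  have hbH : q.out ∉ S.H := fun hmem => hq (by rw [← hb]; exact mk_mem_H (S_sub S) hmem)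
  obtain ⟨V₀, hV₀, hbV₀⟩ := S_not_in_HV S hbH
  obtain ⟨V₃, hV₃, hV₃add⟩ := S_exists_U_add S (S_nhds S hV₀)
  obtain ⟨V₁, hV₁, hdual⟩ := S_dual_neutral S hV₃
  refine ⟨Quotient.mk (cosetSetoid G S.H) '' interior V₁,
    Quotient.mk (cosetSetoid G S.H) '' ((fun w => add q.out w) '' interior V₃),
    isOpenMap_mk (S_sub S) _ isOpen_interior,
    isOpenMap_mk (S_sub S) _ ((ltransHomeo q.out).isOpenMap _ isOpen_interior),
    ⟨zero, mem_interior_iff_mem_nhds.2 (S_nhds S hV₁), rfl⟩,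
    ⟨add q.out zero, ⟨zero, mem_interior_iff_mem_nhds.2 (S_nhds S hV₃), rfl⟩,
      by rw [Gyrogroup.add_zero]; exact hb⟩, ?_⟩
  rw [Set.eq_empty_iff_forall_notMem]
  rintro q' ⟨⟨v, hv, hqv⟩, ⟨bw, ⟨w, hw, hbw⟩, hqbw⟩⟩
  simp only [] at hbw
  rw [← hbw] at hqbw
  have h1 : Quotient.mk (cosetSetoid G S.H) (add q.out w) =
      Quotient.mk (cosetSetoid G S.H) v := hqbw.trans hqv.symm
  obtain ⟨h, hh, heq⟩ := (mk_eq_mk (S_sub S)).1 h1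
  simp only [] at heq
  apply hbV₀
  have e1 : q.out = add (add v h) (gyr q.out w (neg w)) := by
    rw [heq]; exact gtranslate_back q.out w
  obtain ⟨h', hh', u, hu, hvh⟩ := hdual v (interior_subset hv) h hh
  obtain ⟨z, hz, hze⟩ := S_gyr_surj S hV₃ h' u
    (S_gyr_mem S hV₃ q.out w (S_neg_mem S hV₃ (interior_subset hw)))
  have e2 : q.out = add h' (add u z) := by
    rw [gyroassoc, hze, hvh]; exact e1
  exact ⟨h', hh', add u z, hV₃add u hu z hz, e2.symm⟩

theorem S_two_limits {z : ℕ → Quotient (cosetSetoid G S.H)}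
    {q : Quotient (cosetSetoid G S.H)}
    (h1 : Tendsto z atTop (𝓝 (Quotient.mk (cosetSetoid G S.H) zero)))
    (h2 : Tendsto z atTop (𝓝 q)) (hq : q ≠ Quotient.mk (cosetSetoid G S.H) zero) :
    False := by
  obtain ⟨O1, O2, hO1, hO2, hm1, hm2, hdisj⟩ := S_sep S hq
  have e1 : ∀ᶠ k in atTop, z k ∈ O1 := h1 (hO1.mem_nhds hm1)
  have e2 : ∀ᶠ k in atTop, z k ∈ O2 := h2 (hO2.mem_nhds hm2)
  obtain ⟨k, hk1, hk2⟩ := (e1.and e2).exists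
  have : z k ∈ O1 ∩ O2 := ⟨hk1, hk2⟩
  rw [hdisj] at this
  exact this

end GyroProof

namespace GyroProof

theorem fiber_finite_tendsto {u : ℕ → ℕ} (h : ∀ c, {i | u i = c}.Finite) :
    Tendsto u atTop atTop := by
  rw [tendsto_atTop]
  intro b
  have hfin : {i | u i < b}.Finite := by
    have : {i | u i < b} ⊆ ⋃ c ∈ Set.Iio b, {i | u i = c} := by
      intro i hi
      exact Set.mem_biUnion hi rfl
    exact Set.Finite.subset (Set.Finite.biUnion (Set.finite_Iio b) fun c _ => h c) this
  obtain ⟨B, hB⟩ := hfin.bddAbove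
  rw [eventually_atTop]
  refine ⟨B + 1, fun i hi => ?_⟩
  by_contra hlt
  push_neg at hlt
  have : i ≤ B := hB (Set.mem_setOf.2 hlt)
  omega

theorem finite_bound {s : Set ℕ} (h : s.Finite) : ∃ B, ∀ k, B ≤ k → k ∉ s := by
  obtain ⟨B, hB⟩ := h.bddAbove
  exact ⟨B + 1, fun k hk hmem => by have := hB hmem; omega⟩

theorem exists_two_mono (f g : ℕ → ℕ) (hf : Tendsto f atTop atTop)
    (hg : Tendsto g atTop atTop) :
    ∃ ψ : ℕ → ℕ, StrictMono ψ ∧ StrictMono (fun k => f (ψ k)) ∧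
      StrictMono (fun k => g (ψ k)) := by
  have step : ∀ p : ℕ, ∃ j, p < j ∧ f p < f j ∧ g p < g j := by
    intro p
    have e1 : ∀ᶠ j in atTop, p < j := eventually_gt_atTop p
    have e2 : ∀ᶠ j in atTop, f p < f j := hf.eventually_gt_atTop (f p)
    have e3 : ∀ᶠ j in atTop, g p < g j := hg.eventually_gt_atTop (g p)
    obtain ⟨j, ⟨hj1, hj2⟩, hj3⟩ := ((e1.and e2).and e3).exists
    exact ⟨j, hj1, hj2, hj3⟩
  classical
  let ψ : ℕ → ℕ := fun k => Nat.rec 0 (fun _ prev => (step prev).choose) k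
  have hsucc : ∀ k, ψ k < ψ (k + 1) ∧ f (ψ k) < f (ψ (k + 1)) ∧ g (ψ k) < g (ψ (k + 1)) :=
    fun k => (step (ψ k)).choose_spec
  exact ⟨ψ, strictMono_nat_of_lt_succ fun k => (hsucc k).1,
    strictMono_nat_of_lt_succ fun k => (hsucc k).2.1,
    strictMono_nat_of_lt_succ fun k => (hsucc k).2.2⟩

end GyroProof

namespace GyroProof
open Gyrogroup

variable {G : Type*} [TopologicalSpace G] [TopologicalGyrogroup G] (S : GyroSetup G)

theorem case2a (x : ℕ → ℕ → Quotient (cosetSetoid G S.H))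
    (hx : ∀ m, Tendsto (fun n => x m n) atTop (𝓝 (Quotient.mk (cosetSetoid G S.H) zero)))
    (w : ℕ → Quotient (cosetSetoid G S.H))
    (hw : Tendsto w atTop (𝓝 (Quotient.mk (cosetSetoid G S.H) zero)))
    (hwne : ∀ l, w l ≠ Quotient.mk (cosetSetoid G S.H) zero)
    (hI : {m | {n | ∃ l, x m n = w l}.Infinite}.Infinite) :
    ∃ i j : ℕ → ℕ, StrictMono i ∧ StrictMono j ∧
      Tendsto (fun k => x (i k) (j k)) atTop
        (𝓝 (Quotient.mk (cosetSetoid G S.H) zero)) := by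
  classical
  have rowprop : ∀ m, {n | ∃ l, x m n = w l}.Infinite → ∀ N L : ℕ,
      ∃ n, N < n ∧ ∃ l, L ≤ l ∧ x m n = w l := by
    intro m hm N L
    have hfin : {n | ∃ l, l < L ∧ x m n = w l}.Finite := by
      have hsub : {n | ∃ l, l < L ∧ x m n = w l} ⊆ ⋃ l ∈ Set.Iio L, {n | x m n = w l} := by
        rintro n ⟨l, hl, he⟩
        exact Set.mem_biUnion hl he
      exact Set.Finite.subset
        (Set.Finite.biUnion (Set.finite_Iio L)
          fun l _ => S_finite_fiber_row S (hx m) (hwne l)) hsub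
    obtain ⟨n, hnmem, hngt⟩ := (hm.diff hfin).exists_gt N
    obtain ⟨⟨l, hle⟩, hnot⟩ := hnmem
    refine ⟨n, hngt, l, ?_, hle⟩
    by_contra hlt
    push_neg at hlt
    exact hnot ⟨l, hlt, hle⟩
  have step : ∀ (k : ℕ) (p : ℕ × ℕ), ∃ r : ℕ × ℕ × ℕ,
      p.1 < r.1 ∧ p.2 < r.2.1 ∧ k ≤ r.2.2 ∧ x r.1 r.2.1 = w r.2.2 := by
    intro k p
    obtain ⟨m, hmI, hmgt⟩ := hI.exists_gt p.1
    obtain ⟨n, hngt, l, hl, he⟩ := rowprop m hmI p.2 k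
    exact ⟨(m, n, l), hmgt, hngt, hl, he⟩
  let F : ℕ → ℕ × ℕ × ℕ := fun k =>
    Nat.rec ((step 0 (0, 0)).choose) (fun k prev => (step (k+1) (prev.1, prev.2.1)).choose) k
  have hF0 := (step 0 (0, 0)).choose_spec
  have hFS : ∀ k, (F k).1 < (F (k+1)).1 ∧ (F k).2.1 < (F (k+1)).2.1 ∧
      (k+1) ≤ (F (k+1)).2.2 ∧ x (F (k+1)).1 (F (k+1)).2.1 = w (F (k+1)).2.2 := by
    intro k
    exact (step (k+1) ((F k).1, (F k).2.1)).choose_spec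
  have hprop : ∀ k, k ≤ (F k).2.2 ∧ x (F k).1 (F k).2.1 = w (F k).2.2 := by
    intro k
    cases k with
    | zero => exact ⟨hF0.2.2.1, hF0.2.2.2⟩
    | succ k => exact ⟨(hFS k).2.2.1, (hFS k).2.2.2⟩
  refine ⟨fun k => (F k).1, fun k => (F k).2.1,
    strictMono_nat_of_lt_succ fun k => (hFS k).1,
    strictMono_nat_of_lt_succ fun k => (hFS k).2.1, ?_⟩
  rw [tendsto_nhds]
  intro O hO h0
  obtain ⟨L, hL⟩ := eventually_atTop.1 (hw (hO.mem_nhds h0))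
  have : ∀ᶠ k in atTop, x (F k).1 (F k).2.1 ∈ O := by
    refine eventually_atTop.2 ⟨L, fun k hk => ?_⟩
    have h1 := (hprop k).2
    rw [h1]
    exact hL _ (le_trans hk (hprop k).1)
  exact this

end GyroProof

namespace GyroProof
open Gyrogroup

variable {G : Type*} [TopologicalSpace G] [TopologicalGyrogroup G] (S : GyroSetup G)

theorem case2b (hFU : FrechetUrysohnSpace (Quotient (cosetSetoid G S.H)))
    (x : ℕ → ℕ → Quotient (cosetSetoid G S.H))
    (hx : ∀ m, Tendsto (fun n => x m n) atTop (𝓝 (Quotient.mk (cosetSetoid G S.H) zero)))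
    (s : ℕ → G)
    (hsne : ∀ k, Quotient.mk (cosetSetoid G S.H) (s k) ≠ Quotient.mk (cosetSetoid G S.H) zero)
    (hst : Tendsto (fun k => Quotient.mk (cosetSetoid G S.H) (s k)) atTop
      (𝓝 (Quotient.mk (cosetSetoid G S.H) zero)))
    (hmeet : ∀ m, {n | ∃ l, x m n = Quotient.mk (cosetSetoid G S.H) (neg (s l))}.Finite) :
    ∃ i j : ℕ → ℕ, StrictMono i ∧ StrictMono j ∧
      Tendsto (fun k => x (i k) (j k)) atTop
        (𝓝 (Quotient.mk (cosetSetoid G S.H) zero)) := by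
  classical
  set w : ℕ → Quotient (cosetSetoid G S.H) :=
    fun k => Quotient.mk (cosetSetoid G S.H) (neg (s k)) with hwdef
  have hw : Tendsto w atTop (𝓝 (Quotient.mk (cosetSetoid G S.H) zero)) := keyN S hst
  have hwne : ∀ k, w k ≠ Quotient.mk (cosetSetoid G S.H) zero := by
    intro k h
    apply hsne k
    have h1 : neg (s k) ∈ S.H := mem_H_of_mk_eq (S_sub S) h
    have h2 : s k ∈ S.H := by
      have := (S_sub S).neg_mem _ h1
      rwa [gneg_neg] at this
    exact mk_mem_H (S_sub S) h2
  -- each w-value hits any fixed row for only finitely many indices k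
  have hbad : ∀ m, {k | ∃ n, x m n = w k}.Finite := by
    intro m
    by_contra hinf
    rw [← Set.not_infinite] at hinf
    push_neg at hinf
    have hx' : ¬ ∀ n ∈ {n | ∃ l, x m n = w l}, {k | x m n = w k}.Finite := by
      intro hall
      apply hinf
      refine Set.Finite.subset (Set.Finite.biUnion (hmeet m) hall) ?_
      rintro k ⟨n, he⟩
      exact Set.mem_biUnion (⟨k, he⟩ : ∃ l, x m n = w l) he
    push_neg at hx'
    obtain ⟨n, _, hninf⟩ := hx'
    have hswap : {k | w k = x m n}.Infinite := by
      have : {k | x m n = w k} = {k | w k = x m n} := by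
        ext k; exact eq_comm
      rwa [this] at hninf
    have hval := S_const_val S hw hswap
    obtain ⟨k, hk⟩ := hninf.nonempty
    exact hwne k (hk.symm.trans hval)
  choose B hB using fun m => finite_bound (hbad m)
  set kk : ℕ → ℕ := fun m => max m (B m) with hkkdef
  set g : ℕ → G := fun m => s (kk m) with hgdef
  have hkk_ge : ∀ m, m ≤ kk m := fun m => le_max_left _ _
  have hkkt : Tendsto kk atTop atTop := tendsto_atTop_mono hkk_ge tendsto_id
  have hg_t : Tendsto (fun m => Quotient.mk (cosetSetoid G S.H) (g m)) atTop
      (𝓝 (Quotient.mk (cosetSetoid G S.H) zero)) := hst.comp hkkt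
  have hgne : ∀ m, Quotient.mk (cosetSetoid G S.H) (g m) ≠
      Quotient.mk (cosetSetoid G S.H) zero := fun m => hsne (kk m)
  have havoid : ∀ m n, x m n ≠ w (kk m) := by
    intro m n he
    exact hB m (kk m) (le_max_right _ _) ⟨n, he⟩
  set a : ℕ → ℕ → Quotient (cosetSetoid G S.H) :=
    fun m n => Lmap (S_sub S) (g m) (x m n) with hadef
  have ha_ne : ∀ m n, a m n ≠ Quotient.mk (cosetSetoid G S.H) zero := by
    intro m n he
    apply havoid m n
    have h2 := congrArg (Lmap (S_sub S) (neg (g m))) he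
    rw [Lmap_neg_Lmap] at h2
    rw [h2, Lmap_mk, Gyrogroup.add_zero]
  set A : Set (Quotient (cosetSetoid G S.H)) := {q | ∃ m n, m ≤ n ∧ q = a m n} with hAdef
  have hrow_tend : ∀ m, Tendsto (fun n => a m n) atTop
      (𝓝 (Quotient.mk (cosetSetoid G S.H) (g m))) := by
    intro m
    have hc := ((Lmap_cont (S_sub S) (g m)).tendsto
      (Quotient.mk (cosetSetoid G S.H) zero)).comp (hx m)
    have he : Lmap (S_sub S) (g m) (Quotient.mk (cosetSetoid G S.H) zero) =
        Quotient.mk (cosetSetoid G S.H) (g m) := by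
      rw [Lmap_mk, Gyrogroup.add_zero]
    rwa [he] at hc
  have hgmcl : ∀ m, Quotient.mk (cosetSetoid G S.H) (g m) ∈ closure A := by
    intro m
    refine mem_closure_of_tendsto ((hrow_tend m).comp (tendsto_add_atTop_nat m))
      (Eventually.of_forall fun n => ?_)
    exact ⟨m, n + m, Nat.le_add_left m n, rfl⟩
  have h0cl : Quotient.mk (cosetSetoid G S.H) zero ∈ closure A := by
    have h1 := mem_closure_of_tendsto hg_t (Eventually.of_forall hgmcl)
    rwa [closure_closure] at h1
  haveI := hFU
  obtain ⟨α, hαA, hα⟩ := mem_closure_iff_seq_limit.1 h0cl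
  choose mj nj hmn hαeq using hαA
  have hfib : ∀ m, {jj | mj jj = m}.Finite := by
    intro m
    by_contra hinf
    rw [← Set.not_infinite] at hinf
    push_neg at hinf
    set φ : ℕ → ℕ := Nat.nth (fun jj => mj jj = m) with hφdef
    have hφmono : StrictMono φ := Nat.nth_strictMono hinf
    have hφmem : ∀ i, mj (φ i) = m := fun i => Nat.nth_mem_of_infinite hinf i
    have hβ : Tendsto (fun i => α (φ i)) atTop
        (𝓝 (Quotient.mk (cosetSetoid G S.H) zero)) := hα.comp hφmono.tendsto_atTop
    have hβeq : ∀ i, α (φ i) = a m (nj (φ i)) := by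
      intro i
      rw [hαeq (φ i), hφmem i]
    by_cases hc : ∃ c, {i | nj (φ i) = c}.Infinite
    · obtain ⟨c, hcinf⟩ := hc
      have hsub : {i | nj (φ i) = c} ⊆ {i | α (φ i) = a m c} := by
        intro i hi
        have : nj (φ i) = c := hi
        rw [Set.mem_setOf, hβeq i, this]
      have hval := S_const_val S hβ (hcinf.mono hsub)
      exact ha_ne m c hval
    · push_neg at hc
      have hνt : Tendsto (fun i => nj (φ i)) atTop atTop :=
        fiber_finite_tendsto fun c => hc c
      obtain ⟨θ, hθmono, hνθ, _⟩ := exists_two_mono (fun i => nj (φ i)) (fun i => nj (φ i)) hνt hνt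
      have hγ1 : Tendsto (fun i => α (φ (θ i))) atTop
          (𝓝 (Quotient.mk (cosetSetoid G S.H) zero)) := hβ.comp hθmono.tendsto_atTop
      have hγ2 : Tendsto (fun i => α (φ (θ i))) atTop
          (𝓝 (Quotient.mk (cosetSetoid G S.H) (g m))) := by
        have h1 : Tendsto (fun i => x m (nj (φ (θ i)))) atTop
            (𝓝 (Quotient.mk (cosetSetoid G S.H) zero)) := (hx m).comp hνθ.tendsto_atTop
        have h2 := ((Lmap_cont (S_sub S) (g m)).tendsto
          (Quotient.mk (cosetSetoid G S.H) zero)).comp h1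
        have he : Lmap (S_sub S) (g m) (Quotient.mk (cosetSetoid G S.H) zero) =
            Quotient.mk (cosetSetoid G S.H) (g m) := by
          rw [Lmap_mk, Gyrogroup.add_zero]
        rw [he] at h2
        have h2' : Tendsto (fun i => Lmap (S_sub S) (g m) (x m (nj (φ (θ i))))) atTop
            (𝓝 (Quotient.mk (cosetSetoid G S.H) (g m))) := h2
        have hfn : (fun i => Lmap (S_sub S) (g m) (x m (nj (φ (θ i))))) =
            fun i => α (φ (θ i)) := by
          funext i
          rw [hβeq (θ i)]
        rwa [hfn] at h2'
      exact S_two_limits S hγ1 hγ2 (hgne m)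
  have hmjt : Tendsto mj atTop atTop := fiber_finite_tendsto hfib
  have hnjt : Tendsto nj atTop atTop := tendsto_atTop_mono hmn hmjt
  have hχ : Tendsto (fun jj => Lmap (S_sub S) (neg (g (mj jj))) (α jj)) atTop
      (𝓝 (Quotient.mk (cosetSetoid G S.H) zero)) := keyT S hα (hg_t.comp hmjt)
  have hχeq : ∀ jj, Lmap (S_sub S) (neg (g (mj jj))) (α jj) = x (mj jj) (nj jj) := by
    intro jj
    rw [hαeq jj]
    exact Lmap_neg_Lmap (S_sub S) (g (mj jj)) (x (mj jj) (nj jj))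
  obtain ⟨ψ, hψ, hmψ, hnψ⟩ := exists_two_mono mj nj hmjt hnjt
  refine ⟨fun k => mj (ψ k), fun k => nj (ψ k), hmψ, hnψ, ?_⟩
  have h3 := hχ.comp hψ.tendsto_atTop
  have hfn : ((fun jj => Lmap (S_sub S) (neg (g (mj jj))) (α jj)) ∘ ψ) =
      fun k => x (mj (ψ k)) (nj (ψ k)) := by
    funext k
    exact hχeq (ψ k)
  rwa [hfn] at h3

end GyroProof

namespace GyroProof
open Gyrogroup

variable {G : Type*} [TopologicalSpace G] [TopologicalGyrogroup G] (S : GyroSetup G)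

theorem master (hFU : FrechetUrysohnSpace (Quotient (cosetSetoid G S.H)))
    (x : ℕ → ℕ → Quotient (cosetSetoid G S.H))
    (hx : ∀ m, Tendsto (fun n => x m n) atTop (𝓝 (Quotient.mk (cosetSetoid G S.H) zero))) :
    ∃ i j : ℕ → ℕ, StrictMono i ∧ StrictMono j ∧
      Tendsto (fun k => x (i k) (j k)) atTop
        (𝓝 (Quotient.mk (cosetSetoid G S.H) zero)) := by
  classical
  by_cases hop : {Quotient.mk (cosetSetoid G S.H) zero} ∈
      𝓝 (Quotient.mk (cosetSetoid G S.H) zero)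
  · -- the base point is isolated; rows are eventually constant
    have hev : ∀ m, ∃ N, ∀ n, N ≤ n →
        x m n = Quotient.mk (cosetSetoid G S.H) zero := by
      intro m
      have h1 : ∀ᶠ n in atTop, x m n ∈
          ({Quotient.mk (cosetSetoid G S.H) zero} :
            Set (Quotient (cosetSetoid G S.H))) := (hx m) hop
      obtain ⟨N, hN⟩ := eventually_atTop.1 h1
      exact ⟨N, fun n hn => hN n hn⟩
    choose N hN using hev
    let j : ℕ → ℕ := fun k => Nat.rec (N 0) (fun k prev => max (N (k+1)) (prev+1)) k
    have hjmono : StrictMono j :=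
      strictMono_nat_of_lt_succ fun k =>
        lt_of_lt_of_le (Nat.lt_succ_self _) (le_max_right _ _)
    have hje : ∀ k, x k (j k) = Quotient.mk (cosetSetoid G S.H) zero := by
      intro k
      cases k with
      | zero => exact hN 0 _ le_rfl
      | succ k => exact hN (k+1) _ (le_max_left _ _)
    refine ⟨id, j, strictMono_id, hjmono, ?_⟩
    have hfn : (fun k => x (id k) (j k)) =
        fun _ => Quotient.mk (cosetSetoid G S.H) zero := funext hje
    rw [hfn]
    exact tendsto_const_nhds
  · have hcl : Quotient.mk (cosetSetoid G S.H) zero ∈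
        closure {q : Quotient (cosetSetoid G S.H) |
          q ≠ Quotient.mk (cosetSetoid G S.H) zero} := by
      rw [mem_closure_iff_nhds]
      intro N hNn
      by_contra hne
      rw [Set.not_nonempty_iff_eq_empty] at hne
      apply hop
      refine Filter.mem_of_superset hNn ?_
      intro y hy
      by_contra hyne
      have : y ∈ N ∩ {q | q ≠ Quotient.mk (cosetSetoid G S.H) zero} := ⟨hy, hyne⟩
      rw [hne] at this
      exact this
    haveI := hFU
    obtain ⟨t, htmem, ht⟩ := mem_closure_iff_seq_limit.1 hcl
    set s : ℕ → G := fun k => (t k).out with hsdef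
    have hst : ∀ k, Quotient.mk (cosetSetoid G S.H) (s k) = t k :=
      fun k => Quotient.out_eq (t k)
    have hstt : Tendsto (fun k => Quotient.mk (cosetSetoid G S.H) (s k)) atTop
        (𝓝 (Quotient.mk (cosetSetoid G S.H) zero)) := by
      have hfn : (fun k => Quotient.mk (cosetSetoid G S.H) (s k)) = t := funext hst
      rw [hfn]
      exact ht
    have hsne : ∀ k, Quotient.mk (cosetSetoid G S.H) (s k) ≠
        Quotient.mk (cosetSetoid G S.H) zero := by
      intro k
      rw [hst k]
      exact htmem k
    set w : ℕ → Quotient (cosetSetoid G S.H) :=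
      fun k => Quotient.mk (cosetSetoid G S.H) (neg (s k)) with hwdef
    by_cases hI : {m | {n | ∃ l, x m n = w l}.Infinite}.Infinite
    · have hw : Tendsto w atTop (𝓝 (Quotient.mk (cosetSetoid G S.H) zero)) := keyN S hstt
      have hwne : ∀ k, w k ≠ Quotient.mk (cosetSetoid G S.H) zero := by
        intro k h
        apply hsne k
        have h1 : neg (s k) ∈ S.H := mem_H_of_mk_eq (S_sub S) h
        have h2 : s k ∈ S.H := by
          have := (S_sub S).neg_mem _ h1
          rwa [gneg_neg] at this
        exact mk_mem_H (S_sub S) h2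
      exact case2a S x hx w hw hwne hI
    · rw [Set.not_infinite] at hI
      obtain ⟨M, hM⟩ := finite_bound hI
      have hmeet : ∀ m, {n | ∃ l, x (m + M) n =
          Quotient.mk (cosetSetoid G S.H) (neg (s l))}.Finite := by
        intro m
        have h1 : m + M ∉ {m | {n | ∃ l, x m n = w l}.Infinite} :=
          hM (m + M) (Nat.le_add_left M m)
        rw [Set.mem_setOf, Set.not_infinite] at h1
        exact h1
      obtain ⟨i', j', hi', hj', hten⟩ := case2b S hFU (fun m n => x (m + M) n)
        (fun m => hx (m + M)) s hsne hstt hmeet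
      exact ⟨fun k => i' k + M, j',
        fun p q hpq => Nat.add_lt_add_right (hi' hpq) M, hj', hten⟩

end GyroProof

/-- If `H` is neutral and `G/H` is Fréchet–Urysohn, then `G/H` is a strong
α₄-space at `π(0)`. -/
theorem quotient_frechetUrysohn_strong_alpha4 {G : Type*} [TopologicalSpace G]
    [TopologicalGyrogroup G]
(𝒰 : Set (Set G))
    (hbasis : (𝓝 (Gyrogroup.zero : G)).HasBasis (fun U : Set G => U ∈ 𝒰) id)
    (hsym : ∀ U ∈ 𝒰, Gyrogroup.sNeg U = U)
    (hgyr : ∀ U ∈ 𝒰, ∀ x y : G, Gyrogroup.gyr x y '' U = U)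
    (Useq : ℕ → Set G) (hmem : ∀ n, Useq n ∈ 𝒰) (hopen : ∀ n, IsOpen (Useq n))
    (hchain : ∀ n : ℕ, Gyrogroup.sAdd (Useq (n + 1))
      (Gyrogroup.sAdd (Useq (n + 1)) (Useq (n + 1))) ⊆ Useq n)
    (H : Set G) (hH : H = ⋂ n, Useq n)
    (hneutral : ∀ U : Set G, IsOpen U → Gyrogroup.zero ∈ U →
      ∃ V : Set G, IsOpen V ∧ Gyrogroup.zero ∈ V ∧
        Gyrogroup.sAdd H V ⊆ Gyrogroup.sAdd U H)
    (hFU : FrechetUrysohnSpace (Quotient (Gyrogroup.cosetSetoid G H))) :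
    ∀ x : ℕ → ℕ → Quotient (Gyrogroup.cosetSetoid G H),
      (∀ m : ℕ, Tendsto (fun n => x m n) atTop
        (𝓝 (Quotient.mk (Gyrogroup.cosetSetoid G H) Gyrogroup.zero))) →
      ∃ i j : ℕ → ℕ, StrictMono i ∧ StrictMono j ∧
        Tendsto (fun k => x (i k) (j k)) atTop
          (𝓝 (Quotient.mk (Gyrogroup.cosetSetoid G H) Gyrogroup.zero)) := by
  intro x hx
  let S : GyroProof.GyroSetup G :=
    ⟨𝒰, hbasis, hsym, hgyr, Useq, hmem, hopen, hchain, H, hH, hneutral⟩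
  exact GyroProof.master S hFU x hx
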